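/- Let F be a field with a primitive n-th root of unity ω and let gcd(k, n) = 1. Let A be the r×n matrix with (a,c) entry ω^(k·a·c), and let B = (v | w | A) where v = (1,0,...,0)ᵀ, w = (0,...,0,1)ᵀ. Then every r×r column-submatrix of B is invertible, so B generates an MDS [n+2, r] code. -/

import Mathlib

theorem stmt19 {F : Type*} [Field F] {n k r : ℕ} {ω : F} (hω : IsPrimitiveRoot ω n)
    (hk : Nat.Coprime k n) (hr1 : 1 ≤ r) (hrn : r ≤ n) :
    ∀ c : Fin r → (Fin 2 ⊕ Fin n), Function.Injective c →
      Matrix.det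
        ((Matrix.fromCols
            (Matrix.of fun (a : Fin r) (j : Fin 2) =>
              if j = 0 then (if (a : ℕ) = 0 then (1 : F) else 0)
              else (if (a : ℕ) = r - 1 then 1 else 0))
            (Matrix.of fun (a : Fin r) (j : Fin n) => ω ^ (k * (a : ℕ) * (j : ℕ)))).submatrix
          id c) ≠ 0 := by
  classical
  intro c hc hdet
  have hn : 0 < n := lt_of_lt_of_le hr1 hrn
  set ζ : F := ω ^ k with hζdef
  have hζ : IsPrimitiveRoot ζ n := hω.pow_of_coprime k hk
  have hζ0 : ζ ≠ 0 := by
    intro h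
    have h1 : ζ ^ n = 1 := hζ.pow_eq_one
    rw [h, zero_pow hn.ne'] at h1
    exact zero_ne_one h1
  obtain ⟨y, hy0, hyM⟩ := Matrix.exists_vecMul_eq_zero_iff.mpr hdet
  have hrow : ∀ i : Fin r, ∑ a : Fin r,
      y a * (Matrix.fromCols
            (Matrix.of fun (a : Fin r) (j : Fin 2) =>
              if j = 0 then (if (a : ℕ) = 0 then (1 : F) else 0)
              else (if (a : ℕ) = r - 1 then 1 else 0))
            (Matrix.of fun (a : Fin r) (j : Fin n) => ω ^ (k * (a : ℕ) * (j : ℕ)))) a (c i) = 0 := by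
    intro i
    have := congrFun hyM i
    simpa [Matrix.vecMul, dotProduct] using this
  -- the polynomial with coefficients y
  set p : Polynomial F := ∑ a : Fin r, Polynomial.C (y a) * Polynomial.X ^ (a : ℕ) with hpdef
  have hcoeff : ∀ a : Fin r, p.coeff (a : ℕ) = y a := by
    intro a
    rw [hpdef, Polynomial.finset_sum_coeff]
    rw [Finset.sum_eq_single a]
    · simp
    · intro b _ hba
      simp only [Polynomial.coeff_C_mul, Polynomial.coeff_X_pow]
      rw [if_neg (fun h => hba (Fin.ext h.symm))]
      ring
    · simp
  have hdeg : p.natDegree ≤ r - 1 := by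
    apply Polynomial.natDegree_sum_le_of_forall_le
    intro a _
    refine le_trans (Polynomial.natDegree_C_mul_le _ _) ?_
    rw [Polynomial.natDegree_X_pow]
    omega
  have hp0 : p ≠ 0 := by
    intro h
    apply hy0
    funext a
    have := hcoeff a
    rw [h] at this
    simpa using this.symm
  -- evaluation map for columns
  set val : (Fin 2 ⊕ Fin n) → F := Sum.elim (fun _ => 0) (fun j => ζ ^ (j : ℕ)) with hvaldef
  have hy0col : ∀ i : Fin r, c i = Sum.inl 0 → y ⟨0, hr1⟩ = 0 := by
    intro i hij
    have h := hrow i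
    rw [hij] at h
    rw [Finset.sum_eq_single (⟨0, hr1⟩ : Fin r)] at h
    · simpa using h
    · intro b _ hb
      have hb' : (b : ℕ) ≠ 0 := fun hb0 => hb (Fin.ext hb0)
      simp [hb']
    · simp
  have hevalp : ∀ i : Fin r, c i ≠ Sum.inl 1 → p.eval (val (c i)) = 0 := by
    intro i hi1
    match hci : c i with
    | Sum.inl j2 =>
      have hj2 : j2 = 0 := by
        by_contra hne
        refine hi1 ?_
        rw [hci]
        congr 1
        apply Fin.ext
        have h2 := j2.isLt
        have hv : (j2 : ℕ) ≠ 0 := fun h => hne (Fin.ext h)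
        omega
      subst hj2
      have hy00 := hy0col i hci
      have : p.eval 0 = 0 := by
        rw [← Polynomial.coeff_zero_eq_eval_zero]
        have := hcoeff ⟨0, hr1⟩
        simpa [hy00] using this
      simpa [hvaldef] using this
    | Sum.inr j =>
      have h := hrow i
      rw [hci] at h
      have : p.eval (ζ ^ (j : ℕ)) = 0 := by
        rw [hpdef, Polynomial.eval_finset_sum, ← h]
        apply Finset.sum_congr rfl
        intro a _
        simp only [Matrix.fromCols_apply_inr, Matrix.of_apply, Polynomial.eval_mul,
          Polynomial.eval_C, Polynomial.eval_pow, Polynomial.eval_X, hζdef]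
        rw [← pow_mul, ← pow_mul]
        ring_nf
      simpa [hvaldef] using this
  -- injectivity of the evaluation points
  have hinj : ∀ i₁ i₂ : Fin r, c i₁ ≠ Sum.inl 1 → c i₂ ≠ Sum.inl 1 →
      val (c i₁) = val (c i₂) → i₁ = i₂ := by
    intro i₁ i₂ h1 h2 hv
    apply hc
    match hc1 : c i₁, hc2 : c i₂ with
    | Sum.inl a, Sum.inl b =>
      have ha : a = 0 := by
        by_contra hne
        refine h1 ?_
        rw [hc1]
        congr 1
        apply Fin.ext
        have h2a := a.isLt
        have hv : (a : ℕ) ≠ 0 := fun h => hne (Fin.ext h)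
        omega
      have hb : b = 0 := by
        by_contra hne
        refine h2 ?_
        rw [hc2]
        congr 1
        apply Fin.ext
        have h2b := b.isLt
        have hv : (b : ℕ) ≠ 0 := fun h => hne (Fin.ext h)
        omega
      rw [ha, hb]
    | Sum.inl a, Sum.inr b =>
      rw [hc1, hc2] at hv
      exact absurd hv.symm (by simpa [hvaldef] using pow_ne_zero (b : ℕ) hζ0)
    | Sum.inr a, Sum.inl b =>
      rw [hc1, hc2] at hv
      exact absurd hv (by simpa [hvaldef] using pow_ne_zero (a : ℕ) hζ0)
    | Sum.inr a, Sum.inr b =>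
      rw [hc1, hc2] at hv
      simp only [hvaldef, Sum.elim_inr] at hv
      have := hζ.pow_inj a.isLt b.isLt hv
      exact congrArg Sum.inr (Fin.ext this)
  by_cases hB : ∃ i0 : Fin r, c i0 = Sum.inl 1
  · obtain ⟨i0, hi0⟩ := hB
    -- coeff (r-1) = 0
    have hyr : y ⟨r - 1, by omega⟩ = 0 := by
      have h := hrow i0
      rw [hi0] at h
      rw [Finset.sum_eq_single (⟨r - 1, by omega⟩ : Fin r)] at h
      · simpa using h
      · intro b _ hb
        have hb' : (b : ℕ) ≠ r - 1 := fun hb0 => hb (Fin.ext hb0)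
        simp [hb']
      · simp
    have hcr : p.coeff (r - 1) = 0 := by
      have := hcoeff ⟨r - 1, by omega⟩
      simpa [hyr] using this
    have hdeg2 : p.natDegree < r - 1 := by
      refine lt_of_le_of_ne hdeg (fun h => hp0 ?_)
      apply Polynomial.leadingCoeff_eq_zero.mp
      rw [Polynomial.leadingCoeff, h]
      exact hcr
    have hcard : Fintype.card {i : Fin r // i ≠ i0} = r - 1 := by
      simp [Fintype.card_subtype_compl]
    have hpz : p = 0 := by
      apply Polynomial.eq_zero_of_natDegree_lt_card_of_eval_eq_zero p
        (f := fun i : {i : Fin r // i ≠ i0} => val (c i.1))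
      · intro i₁ i₂ hv
        have hne1 : c i₁.1 ≠ Sum.inl 1 := fun h => i₁.2 (hc (h.trans hi0.symm))
        have hne2 : c i₂.1 ≠ Sum.inl 1 := fun h => i₂.2 (hc (h.trans hi0.symm))
        exact Subtype.ext (hinj _ _ hne1 hne2 hv)
      · intro i
        exact hevalp i.1 (fun h => i.2 (hc (h.trans hi0.symm)))
      · rw [hcard]; exact hdeg2
    exact hp0 hpz
  · push_neg at hB
    have hpz : p = 0 := by
      apply Polynomial.eq_zero_of_natDegree_lt_card_of_eval_eq_zero p
        (f := fun i : Fin r => val (c i))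
      · intro i₁ i₂ hv
        exact hinj _ _ (hB i₁) (hB i₂) hv
      · intro i
        exact hevalp i (hB i)
      · rw [Fintype.card_fin]
        omega
    exact hp0 hpz
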